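/- Let W ∈ ℝ^{n×n} be a symmetric nonzero matrix with w = Σ_{i,j}|W_{ij}| and Π = I − (1/n)·1·1ᵀ. Then the maximum and minimum of I(v; W) over non-constant v ∈ ℝⁿ exist and equal (n/w)·λ_max and (n/w)·λ_min respectively, where λ_max and λ_min are the largest and smallest eigenvalues of the symmetric matrix Π W Π that admit an eigenvector lying in X = {x : x·1 = 0}; moreover these extreme values of I are attained at such eigenvectors. -/

import Mathlib

open Matrix BigOperators Finset

noncomputable def mean {n : ℕ} (v : Fin n → ℝ) : ℝ := (∑ i, v i) / n

noncomputable def centered {n : ℕ} (v : Fin n → ℝ) : Fin n → ℝ := fun i => v i - mean v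

noncomputable def moranI {n : ℕ} (W : Matrix (Fin n) (Fin n) ℝ) (v : Fin n → ℝ) : ℝ :=
  ((n : ℝ) / ∑ i, ∑ j, |W i j|) * (centered v ⬝ᵥ (W *ᵥ centered v)) / (centered v ⬝ᵥ centered v)

/-- `v` is not a constant vector. -/
def Nonconst {n : ℕ} (v : Fin n → ℝ) : Prop := ∃ i j, v i ≠ v j

/-- The orthogonal projection `Π = I - (1/n)·𝟙𝟙ᵀ` onto the space of mean-zero vectors. -/
noncomputable def proj (n : ℕ) : Matrix (Fin n) (Fin n) ℝ :=
  1 - ((n : ℝ)⁻¹) • Matrix.of (fun _ _ => (1 : ℝ))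

namespace MoranAux

variable {n : ℕ} {W : Matrix (Fin n) (Fin n) ℝ}

lemma dot_one_eq_sum (x : Fin n → ℝ) : (x ⬝ᵥ fun _ => (1:ℝ)) = ∑ i, x i := by
  simp [dotProduct]

lemma proj_mulVec (x : Fin n → ℝ) :
    proj n *ᵥ x = fun i => x i - (n:ℝ)⁻¹ * ∑ j, x j := by
  funext i
  simp [proj, Matrix.sub_mulVec, Matrix.smul_mulVec, Matrix.one_mulVec,
    Matrix.mulVec, dotProduct, sub_mul, Finset.sum_sub_distrib, Matrix.one_apply,
    Finset.mul_sum, ite_mul]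

lemma proj_mulVec_of_sum_zero {x : Fin n → ℝ} (hx : ∑ i, x i = 0) :
    proj n *ᵥ x = x := by
  rw [proj_mulVec]; funext i; simp [hx]

lemma sum_proj_mulVec (hn : n ≠ 0) (x : Fin n → ℝ) :
    ∑ i, (proj n *ᵥ x) i = 0 := by
  have hnR : (n : ℝ) ≠ 0 := Nat.cast_ne_zero.mpr hn
  rw [proj_mulVec]
  rw [Finset.sum_sub_distrib, Finset.sum_const, Finset.card_univ, Fintype.card_fin,
    nsmul_eq_mul]
  field_simp
  ring

lemma proj_transpose : (proj n)ᵀ = proj n := by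
  unfold proj
  rw [Matrix.transpose_sub, Matrix.transpose_one, Matrix.transpose_smul]
  congr 1

lemma A_transpose (hW : Wᵀ = W) : (proj n * W * proj n)ᵀ = proj n * W * proj n := by
  rw [Matrix.transpose_mul, Matrix.transpose_mul, proj_transpose, hW, Matrix.mul_assoc]

lemma dot_A_symm (hW : Wᵀ = W) (x y : Fin n → ℝ) :
    ((proj n * W * proj n) *ᵥ x) ⬝ᵥ y = x ⬝ᵥ ((proj n * W * proj n) *ᵥ y) := by
  conv_rhs => rw [Matrix.dotProduct_mulVec, ← A_transpose hW, Matrix.vecMul_transpose]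

lemma sum_A_mulVec (hn : n ≠ 0) (x : Fin n → ℝ) :
    ∑ i, ((proj n * W * proj n) *ᵥ x) i = 0 := by
  have : (proj n * W * proj n) *ᵥ x = proj n *ᵥ ((W * proj n) *ᵥ x) := by
    rw [Matrix.mulVec_mulVec, Matrix.mul_assoc]
  rw [this]
  exact sum_proj_mulVec hn _

lemma quad_eq (hW : Wᵀ = W) {x : Fin n → ℝ} (hx : ∑ i, x i = 0) :
    x ⬝ᵥ ((proj n * W * proj n) *ᵥ x) = x ⬝ᵥ (W *ᵥ x) := by
  have h1 : (proj n * W * proj n) *ᵥ x = proj n *ᵥ (W *ᵥ x) := by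
    rw [← Matrix.mulVec_mulVec, proj_mulVec_of_sum_zero hx, ← Matrix.mulVec_mulVec]
  rw [h1, Matrix.dotProduct_mulVec, ← proj_transpose, Matrix.vecMul_transpose,
    proj_mulVec_of_sum_zero hx]

lemma centered_of_sum_zero {x : Fin n → ℝ} (hx : ∑ i, x i = 0) : centered x = x := by
  funext i; simp [centered, mean, hx]

lemma sum_centered (hn : n ≠ 0) (v : Fin n → ℝ) : ∑ i, centered v i = 0 := by
  have hnR : (n : ℝ) ≠ 0 := Nat.cast_ne_zero.mpr hn
  simp only [centered, Finset.sum_sub_distrib, Finset.sum_const, Finset.card_univ,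
    Fintype.card_fin, nsmul_eq_mul, mean]
  field_simp
  ring

lemma nonconst_of_sum_zero (hn : n ≠ 0) {x : Fin n → ℝ} (hx0 : x ≠ 0)
    (hx : ∑ i, x i = 0) : Nonconst x := by
  by_contra h
  unfold Nonconst at h
  push_neg at h
  let i0 : Fin n := ⟨0, Nat.pos_of_ne_zero hn⟩
  have hconst : ∀ i, x i = x i0 := fun i => h i i0
  have : (n : ℝ) * x i0 = 0 := by
    rw [← hx]
    rw [Finset.sum_congr rfl (fun i _ => hconst i)]
    simp [mul_comm]
  have hxi0 : x i0 = 0 := by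
    rcases mul_eq_zero.mp this with h' | h'
    · exact absurd h' (Nat.cast_ne_zero.mpr hn)
    · exact h'
  exact hx0 (funext fun i => by rw [hconst i, hxi0]; rfl)

lemma nonconst_centered {v : Fin n → ℝ} (hv : Nonconst v) : centered v ≠ 0 := by
  obtain ⟨i, j, hij⟩ := hv
  intro h0
  have hi : centered v i = 0 := by rw [h0]; rfl
  have hj : centered v j = 0 := by rw [h0]; rfl
  simp only [centered, sub_eq_zero] at hi hj
  exact hij (hi.trans hj.symm)

lemma dotProduct_self_pos {x : Fin n → ℝ} (hx : x ≠ 0) : 0 < x ⬝ᵥ x := by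
  obtain ⟨i, hi⟩ := Function.ne_iff.mp hx
  apply Finset.sum_pos'
  · exact fun j _ => mul_self_nonneg _
  · exact ⟨i, Finset.mem_univ i, mul_self_pos.mpr hi⟩

end MoranAux

open MoranAux

set_option synthInstance.maxHeartbeats 1000000 in
set_option maxHeartbeats 1000000 in
/-- the extreme values of Moran's I over non-constant vectors are
`(n/w)·λmax` and `(n/w)·λmin`, where `λmax`, `λmin` are the largest and smallest
eigenvalues of `ΠWΠ` admitting an eigenvector in the mean-zero subspace, and the
extreme values are attained at such eigenvectors. -/
theorem moranI_extreme_values {n : ℕ} (hn : 2 ≤ n)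
    (W : Matrix (Fin n) (Fin n) ℝ) (hW : Wᵀ = W) (hW0 : W ≠ 0) :
    ∃ lmax lmin : ℝ,
      IsGreatest {lam : ℝ | ∃ x : Fin n → ℝ, x ≠ 0 ∧ (x ⬝ᵥ fun _ => 1) = 0 ∧
        (proj n * W * proj n) *ᵥ x = lam • x} lmax ∧
      IsLeast {lam : ℝ | ∃ x : Fin n → ℝ, x ≠ 0 ∧ (x ⬝ᵥ fun _ => 1) = 0 ∧
        (proj n * W * proj n) *ᵥ x = lam • x} lmin ∧
      IsGreatest {y : ℝ | ∃ v : Fin n → ℝ, Nonconst v ∧ moranI W v = y}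
        (((n : ℝ) / ∑ i, ∑ j, |W i j|) * lmax) ∧
      IsLeast {y : ℝ | ∃ v : Fin n → ℝ, Nonconst v ∧ moranI W v = y}
        (((n : ℝ) / ∑ i, ∑ j, |W i j|) * lmin) ∧
      (∃ x : Fin n → ℝ, x ≠ 0 ∧ (x ⬝ᵥ fun _ => 1) = 0 ∧
        (proj n * W * proj n) *ᵥ x = lmax • x ∧
        moranI W x = ((n : ℝ) / ∑ i, ∑ j, |W i j|) * lmax) ∧
      (∃ x : Fin n → ℝ, x ≠ 0 ∧ (x ⬝ᵥ fun _ => 1) = 0 ∧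
        (proj n * W * proj n) *ᵥ x = lmin • x ∧
        moranI W x = ((n : ℝ) / ∑ i, ∑ j, |W i j|) * lmin) := by
  classical
  have hn0 : n ≠ 0 := by omega
  have hnR : (0:ℝ) < n := by
    have : 0 < n := by omega
    exact_mod_cast this
  have hw : 0 < ∑ i, ∑ j, |W i j| := by
    obtain ⟨i, j, hij⟩ : ∃ i j, W i j ≠ 0 := by
      by_contra h
      push_neg at h
      exact hW0 (by ext i j; simp [h])
    exact Finset.sum_pos' (fun i _ => Finset.sum_nonneg fun j _ => abs_nonneg _)
      ⟨i, Finset.mem_univ i, Finset.sum_pos' (fun j _ => abs_nonneg _)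
        ⟨j, Finset.mem_univ j, abs_pos.mpr hij⟩⟩
  have hc : 0 < (n : ℝ) / ∑ i, ∑ j, |W i j| := div_pos hnR hw
  -- Euclidean space setup
  let o : EuclideanSpace ℝ (Fin n) := WithLp.toLp 2 (fun _ => 1)
  let X : Submodule ℝ (EuclideanSpace ℝ (Fin n)) := (ℝ ∙ o)ᗮ
  have hinner : ∀ x y : EuclideanSpace ℝ (Fin n), (inner ℝ x y : ℝ) = x ⬝ᵥ y := by
    intro x y
    simp [PiLp.inner_apply, RCLike.inner_apply, dotProduct, mul_comm]
  have hmemX : ∀ x : EuclideanSpace ℝ (Fin n), x ∈ X ↔ ∑ i, x i = 0 := by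
    intro x
    rw [Submodule.mem_orthogonal_singleton_iff_inner_right, hinner]
    simp [dotProduct, o]
  let L : EuclideanSpace ℝ (Fin n) →ₗ[ℝ] EuclideanSpace ℝ (Fin n) :=
    { toFun := fun x => WithLp.toLp 2 ((proj n * W * proj n) *ᵥ x)
      map_add' := fun x y => by
        rw [← WithLp.toLp_add]; exact congrArg (WithLp.toLp 2) (Matrix.mulVec_add _ x y)
      map_smul' := fun r x => by
        rw [RingHom.id_apply, ← WithLp.toLp_smul]
        exact congrArg (WithLp.toLp 2) (Matrix.mulVec_smul _ r x) }
  have hLmem : ∀ x ∈ X, L x ∈ X := fun x _ => (hmemX _).mpr (sum_A_mulVec (W := W) hn0 x)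
  let T : ↥X →ₗ[ℝ] ↥X := L.restrict hLmem
  haveI : Nontrivial ↥X := by
    have h01 : (⟨0, by omega⟩ : Fin n) ≠ ⟨1, by omega⟩ := by
      intro h
      simpa using congrArg Fin.val h
    let u : EuclideanSpace ℝ (Fin n) := WithLp.toLp 2 (fun i =>
      Pi.single (M := fun _ : Fin n => ℝ) ⟨0, by omega⟩ 1 i -
        Pi.single (M := fun _ : Fin n => ℝ) ⟨1, by omega⟩ 1 i)
    have hrw : ∀ i, u i = Pi.single (M := fun _ : Fin n => ℝ) ⟨0, by omega⟩ 1 i -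
        Pi.single (M := fun _ : Fin n => ℝ) ⟨1, by omega⟩ 1 i := fun i => rfl
    have husum : ∑ i, u i = 0 := by
      rw [Finset.sum_congr rfl fun i _ => hrw i, Finset.sum_sub_distrib,
        Finset.sum_pi_single', Finset.sum_pi_single']
      simp
    have hu0 : u ≠ 0 := by
      intro h
      have h2 : Pi.single (M := fun _ : Fin n => ℝ) ⟨0, by omega⟩ 1 ⟨0, by omega⟩ -
          Pi.single (M := fun _ : Fin n => ℝ) ⟨1, by omega⟩ 1 ⟨0, by omega⟩ = 0 := by
        first
          | exact congrArg (fun v : EuclideanSpace ℝ (Fin n) => v ⟨0, by omega⟩) h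
          | (rw [← hrw]; exact congrFun h _)
      rw [Pi.single_eq_of_ne h01] at h2
      norm_num at h2
    exact ⟨⟨u, (hmemX u).mpr husum⟩, 0,
      fun h => hu0 (by simpa using congrArg Subtype.val h)⟩
  have hTsym : T.IsSymmetric := by
    intro z z'
    show (inner ℝ (T z) z' : ℝ) = inner ℝ z (T z')
    rw [Submodule.coe_inner, Submodule.coe_inner, LinearMap.restrict_coe_apply,
      LinearMap.restrict_coe_apply, hinner, hinner]
    exact dot_A_symm hW _ _
  have hre : ∀ r : ℝ, RCLike.re r = r := fun r => rfl
  -- Rayleigh quotient function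
  set f : {x : ↥X // x ≠ 0} → ℝ :=
    fun x => RCLike.re (inner ℝ (T ↑x) (↑x : ↥X) : ℝ) / ‖(↑x : ↥X)‖ ^ 2 with hf
  set lmax := ⨆ x : {x : ↥X // x ≠ 0}, f x with hlmax
  set lmin := ⨅ x : {x : ↥X // x ≠ 0}, f x with hlmin
  have hmaxeig : Module.End.HasEigenvalue T lmax :=
    hTsym.hasEigenvalue_iSup_of_finiteDimensional
  have hmineig : Module.End.HasEigenvalue T lmin :=
    hTsym.hasEigenvalue_iInf_of_finiteDimensional
  -- boundedness of the Rayleigh quotient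
  have habs : ∀ z : {x : ↥X // x ≠ 0},
      |(inner ℝ (T ↑z) (↑z : ↥X) : ℝ)| ≤ ‖LinearMap.toContinuousLinearMap T‖ * ‖(↑z : ↥X)‖ ^ 2 := by
    intro z
    have h1 : |(inner ℝ (T ↑z) (↑z : ↥X) : ℝ)| ≤ ‖T ↑z‖ * ‖(↑z : ↥X)‖ :=
      abs_real_inner_le_norm _ _
    have h2 : ‖T ↑z‖ ≤ ‖LinearMap.toContinuousLinearMap T‖ * ‖(↑z : ↥X)‖ := by
      have := (LinearMap.toContinuousLinearMap T).le_opNorm (↑z : ↥X)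
      simpa using this
    calc |(inner ℝ (T ↑z) (↑z : ↥X) : ℝ)| ≤ ‖T ↑z‖ * ‖(↑z : ↥X)‖ := h1
      _ ≤ ‖LinearMap.toContinuousLinearMap T‖ * ‖(↑z : ↥X)‖ * ‖(↑z : ↥X)‖ :=
          mul_le_mul_of_nonneg_right h2 (norm_nonneg _)
      _ = ‖LinearMap.toContinuousLinearMap T‖ * ‖(↑z : ↥X)‖ ^ 2 := by ring
  have hnormpos : ∀ z : {x : ↥X // x ≠ 0}, (0:ℝ) < ‖(↑z : ↥X)‖ ^ 2 := by
    intro z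
    exact pow_pos (norm_pos_iff.mpr z.2) 2
  have hbAbove : BddAbove (Set.range f) := by
    refine ⟨‖LinearMap.toContinuousLinearMap T‖, ?_⟩
    rintro y ⟨z, rfl⟩
    rw [hf]
    simp only []
    rw [hre, div_le_iff₀ (hnormpos z)]
    exact le_trans (le_abs_self _) (habs z)
  have hbBelow : BddBelow (Set.range f) := by
    refine ⟨-‖LinearMap.toContinuousLinearMap T‖, ?_⟩
    rintro y ⟨z, rfl⟩
    rw [hf]
    simp only []
    rw [hre, le_div_iff₀ (hnormpos z)]
    have := neg_abs_le (inner ℝ (T ↑z) (↑z : ↥X) : ℝ)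
    have h3 := habs z
    nlinarith
  have hle_lmax : ∀ z : {x : ↥X // x ≠ 0}, f z ≤ lmax := fun z => le_ciSup hbAbove z
  have hlmin_le : ∀ z : {x : ↥X // x ≠ 0}, lmin ≤ f z := fun z => ciInf_le hbBelow z
  -- Rayleigh value of an eigenvector
  have heigval : ∀ (μ : ℝ) (z : {x : ↥X // x ≠ 0}), T ↑z = μ • (↑z : ↥X) → f z = μ := by
    intro μ z hTz
    rw [hf]
    simp only []
    rw [hre, hTz, real_inner_smul_left, real_inner_self_eq_norm_sq]
    have hz' : ‖(↑z : ↥X)‖ ≠ 0 := norm_ne_zero_iff.mpr z.2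
    have hz'' : ‖((↑z : ↥X) : EuclideanSpace ℝ (Fin n))‖ ≠ 0 := by
      rwa [Submodule.norm_coe]
    first
      | exact mul_div_cancel_right₀ μ (pow_ne_zero 2 hz')
      | exact mul_div_cancel_right₀ μ (pow_ne_zero 2 hz'')
  -- Rayleigh value in dot-product form
  have hRz : ∀ z : ↥X, (inner ℝ (T z) (z : ↥X) : ℝ) = ((z : EuclideanSpace ℝ (Fin n))) ⬝ᵥ (W *ᵥ (z : EuclideanSpace ℝ (Fin n))) := by
    intro z
    have hsum : ∑ i, (z : EuclideanSpace ℝ (Fin n)) i = 0 := (hmemX _).mp z.2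
    rw [Submodule.coe_inner, LinearMap.restrict_coe_apply, hinner]
    calc ((proj n * W * proj n) *ᵥ (z : EuclideanSpace ℝ (Fin n))) ⬝ᵥ (z : EuclideanSpace ℝ (Fin n))
        = (z : EuclideanSpace ℝ (Fin n)) ⬝ᵥ ((proj n * W * proj n) *ᵥ (z : EuclideanSpace ℝ (Fin n))) :=
          dotProduct_comm _ _
      _ = _ := quad_eq hW hsum
  have hNz : ∀ z : ↥X, ‖z‖ ^ 2 = ((z : EuclideanSpace ℝ (Fin n))) ⬝ᵥ ((z : EuclideanSpace ℝ (Fin n))) := by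
    intro z
    rw [← Submodule.norm_coe, ← real_inner_self_eq_norm_sq, hinner]
  have hfdot : ∀ z : {x : ↥X // x ≠ 0},
      f z = (((z : ↥X) : EuclideanSpace ℝ (Fin n)) ⬝ᵥ (W *ᵥ ((z : ↥X) : EuclideanSpace ℝ (Fin n)))) /
        (((z : ↥X) : EuclideanSpace ℝ (Fin n)) ⬝ᵥ ((z : ↥X) : EuclideanSpace ℝ (Fin n))) := by
    intro z
    rw [hf]
    simp only []
    rw [hre, hRz, hNz]
  -- Moran's I at eigenvectors
  have hmoran_eig : ∀ (μ : ℝ) (x : Fin n → ℝ), x ≠ 0 → ∑ i, x i = 0 →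
      (proj n * W * proj n) *ᵥ x = μ • x →
      moranI W x = ((n : ℝ) / ∑ i, ∑ j, |W i j|) * μ := by
    intro μ x hx0 hxs hAx
    have hcent : centered x = x := centered_of_sum_zero hxs
    have hd : (0:ℝ) < x ⬝ᵥ x := dotProduct_self_pos hx0
    have hq : x ⬝ᵥ (W *ᵥ x) = μ * (x ⬝ᵥ x) := by
      rw [← quad_eq hW hxs, hAx, dotProduct_smul, smul_eq_mul]
    unfold moranI
    rw [hcent, hq]
    field_simp
  -- Moran's I bounds for nonconstant vectors
  have hmoran_bnd : ∀ v : Fin n → ℝ, Nonconst v →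
      moranI W v ≤ ((n : ℝ) / ∑ i, ∑ j, |W i j|) * lmax ∧
      ((n : ℝ) / ∑ i, ∑ j, |W i j|) * lmin ≤ moranI W v := by
    intro v hv
    have hxs : ∑ i, centered v i = 0 := sum_centered hn0 v
    have hx0 : centered v ≠ 0 := nonconst_centered hv
    let z : ↥X := ⟨WithLp.toLp 2 (centered v), (hmemX _).mpr hxs⟩
    have hz0 : z ≠ 0 := fun h => hx0 (by exact congrArg (fun w : ↥X => ((w : EuclideanSpace ℝ (Fin n)) : Fin n → ℝ)) h)
    have hmor : moranI W v =
        ((n : ℝ) / ∑ i, ∑ j, |W i j|) * ((centered v ⬝ᵥ (W *ᵥ centered v)) / (centered v ⬝ᵥ centered v)) := by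
      unfold moranI
      rw [mul_div_assoc]
    have hzval : f ⟨z, hz0⟩ = (centered v ⬝ᵥ (W *ᵥ centered v)) / (centered v ⬝ᵥ centered v) :=
      hfdot ⟨z, hz0⟩
    constructor
    · rw [hmor, ← hzval]
      exact mul_le_mul_of_nonneg_left (hle_lmax ⟨z, hz0⟩) hc.le
    · rw [hmor, ← hzval]
      exact mul_le_mul_of_nonneg_left (hlmin_le ⟨z, hz0⟩) hc.le
  -- eigenvectors of lmax and lmin as plain vectors
  obtain ⟨zmax, hzmax⟩ := hmaxeig.exists_hasEigenvector
  obtain ⟨zmin, hzmin⟩ := hmineig.exists_hasEigenvector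
  have hTzmax : T zmax = lmax • zmax := hzmax.apply_eq_smul
  have hTzmin : T zmin = lmin • zmin := hzmin.apply_eq_smul
  have hxmax0 : ((zmax : EuclideanSpace ℝ (Fin n)) : Fin n → ℝ) ≠ 0 := by
    intro h
    exact hzmax.2 (Subtype.ext (WithLp.ofLp_injective 2 h))
  have hxmin0 : ((zmin : EuclideanSpace ℝ (Fin n)) : Fin n → ℝ) ≠ 0 := by
    intro h
    exact hzmin.2 (Subtype.ext (WithLp.ofLp_injective 2 h))
  have hxmaxsum : ∑ i, (zmax : EuclideanSpace ℝ (Fin n)) i = 0 := (hmemX _).mp zmax.2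
  have hxminsum : ∑ i, (zmin : EuclideanSpace ℝ (Fin n)) i = 0 := (hmemX _).mp zmin.2
  have hAxmax : (proj n * W * proj n) *ᵥ (zmax : EuclideanSpace ℝ (Fin n)) =
      lmax • (zmax : EuclideanSpace ℝ (Fin n)) := by
    have := congrArg (fun v : ↥X => ((v : EuclideanSpace ℝ (Fin n)) : Fin n → ℝ)) hTzmax
    exact this
  have hAxmin : (proj n * W * proj n) *ᵥ (zmin : EuclideanSpace ℝ (Fin n)) =
      lmin • (zmin : EuclideanSpace ℝ (Fin n)) := by
    have := congrArg (fun v : ↥X => ((v : EuclideanSpace ℝ (Fin n)) : Fin n → ℝ)) hTzmin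
    exact this
  -- upper bound for the eigenvalue set
  have heig_le : ∀ lam : ℝ, (∃ x : Fin n → ℝ, x ≠ 0 ∧ (x ⬝ᵥ fun _ => 1) = 0 ∧
      (proj n * W * proj n) *ᵥ x = lam • x) → lam ≤ lmax ∧ lmin ≤ lam := by
    rintro lam ⟨x, hx0, hx1, hAx⟩
    rw [dot_one_eq_sum] at hx1
    let z : ↥X := ⟨WithLp.toLp 2 x, (hmemX _).mpr hx1⟩
    have hz0 : z ≠ 0 := fun h => hx0 (by exact congrArg (fun w : ↥X => ((w : EuclideanSpace ℝ (Fin n)) : Fin n → ℝ)) h)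
    have hTz : T z = lam • z := Subtype.ext (congrArg (WithLp.toLp 2) hAx)
    have hval : f ⟨z, hz0⟩ = lam := heigval lam ⟨z, hz0⟩ hTz
    exact ⟨hval ▸ hle_lmax ⟨z, hz0⟩, hval ▸ hlmin_le ⟨z, hz0⟩⟩
  refine ⟨lmax, lmin, ?_, ?_, ?_, ?_, ?_, ?_⟩
  · exact ⟨⟨(zmax : EuclideanSpace ℝ (Fin n)), hxmax0,
      by rw [dot_one_eq_sum]; exact hxmaxsum, hAxmax⟩,
      fun lam hlam => (heig_le lam hlam).1⟩
  · exact ⟨⟨(zmin : EuclideanSpace ℝ (Fin n)), hxmin0,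
      by rw [dot_one_eq_sum]; exact hxminsum, hAxmin⟩,
      fun lam hlam => (heig_le lam hlam).2⟩
  · refine ⟨⟨(zmax : EuclideanSpace ℝ (Fin n)),
      nonconst_of_sum_zero hn0 hxmax0 hxmaxsum,
      hmoran_eig lmax _ hxmax0 hxmaxsum hAxmax⟩, ?_⟩
    rintro y ⟨v, hv, rfl⟩
    exact (hmoran_bnd v hv).1
  · refine ⟨⟨(zmin : EuclideanSpace ℝ (Fin n)),
      nonconst_of_sum_zero hn0 hxmin0 hxminsum,
      hmoran_eig lmin _ hxmin0 hxminsum hAxmin⟩, ?_⟩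
    rintro y ⟨v, hv, rfl⟩
    exact (hmoran_bnd v hv).2
  · exact ⟨(zmax : EuclideanSpace ℝ (Fin n)), hxmax0,
      by rw [dot_one_eq_sum]; exact hxmaxsum, hAxmax,
      hmoran_eig lmax _ hxmax0 hxmaxsum hAxmax⟩
  · exact ⟨(zmin : EuclideanSpace ℝ (Fin n)), hxmin0,
      by rw [dot_one_eq_sum]; exact hxminsum, hAxmin,
      hmoran_eig lmin _ hxmin0 hxminsum hAxmin⟩
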